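/- Let h > 0, α > 0, and let T_0 be the right-handed triangular function T_0(t) = t/h for 0 ≤ t < h and T_0(t) = 0 otherwise. Then for all t ≥ h, the Riemann–Liouville fractional integral of order α of T_0 satisfies J^α T_0(t) = (1/(h·Γ(α))) · [ t·(t^α − (t−h)^α)/α − (t^{α+1} − (t−h)^{α+1})/(α+1) ]. -/

import Mathlib

/-- The `i`-th right-handed triangular function on the grid of step `h`:
`T_i(t) = (t − i·h)/h` for `i·h ≤ t < (i+1)·h` and `0` otherwise. -/
noncomputable def tfn (h : ℝ) (i : ℕ) (t : ℝ) : ℝ :=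
  if (i : ℝ) * h ≤ t ∧ t < ((i : ℝ) + 1) * h then (t - (i : ℝ) * h) / h else 0

/-- The Riemann–Liouville fractional integral of order `α` of `f`,
`J^α f(t) = (1/Γ(α)) ∫₀ᵗ (t−τ)^{α−1} f(τ) dτ`. -/
noncomputable def rlIntegral (α : ℝ) (f : ℝ → ℝ) (t : ℝ) : ℝ :=
  (1 / Real.Gamma α) * ∫ τ in (0 : ℝ)..t, (t - τ) ^ (α - 1) * f τ

/-- for `t ≥ h`, the Riemann–Liouville fractional integral of
order `α` of the first right-handed triangular function `T_0` is
`J^α T_0(t) = (1/(h·Γ(α)))·[t·(t^α − (t−h)^α)/α − (t^{α+1} − (t−h)^{α+1})/(α+1)]`. -/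
theorem rlIntegral_tfn_zero_tail (h α : ℝ) (hh : 0 < h) (hα : 0 < α) :
    ∀ t : ℝ, h ≤ t →
      rlIntegral α (tfn h 0) t =
        (1 / (h * Real.Gamma α)) *
          (t * (t ^ α - (t - h) ^ α) / α -
            (t ^ (α + 1) - (t - h) ^ (α + 1)) / (α + 1)) := by
  intro t ht
  have h0t : (0:ℝ) < t := lt_of_lt_of_le hh ht
  have hΓ : Real.Gamma α ≠ 0 := (Real.Gamma_pos_of_pos hα).ne'
  set g : ℝ → ℝ := fun τ => (t - τ) ^ (α - 1) * (τ / h) with hg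
  set F : ℝ → ℝ := fun τ =>
    ((-(t * (t - τ) ^ α)) / α + (t - τ) ^ (α + 1) / (α + 1)) / h with hF
  -- integrability of g on [0, h]
  have h1 : IntervalIntegrable (fun x => (t - x) ^ (α - 1)) MeasureTheory.volume 0 h := by
    have := (intervalIntegral.intervalIntegrable_rpow' (a := t) (b := t - h)
      (r := α - 1) (by linarith)).comp_sub_left t
    simpa using this
  have hig : IntervalIntegrable g MeasureTheory.volume 0 h :=
    h1.mul_continuousOn ((continuous_id.div_const h).continuousOn)
  -- a.e. equality of the integrand with g on Ι 0 h
  have hne_h : ∀ᵐ x : ℝ, x ≠ h := by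
    rw [MeasureTheory.ae_iff]
    have hs : {x : ℝ | ¬ x ≠ h} = {h} := by ext x; simp
    rw [hs]; exact MeasureTheory.measure_singleton h
  have hae0 : ∀ᵐ x : ℝ, x ∈ Set.uIoc (0:ℝ) h → g x = (t - x) ^ (α - 1) * tfn h 0 x := by
    filter_upwards [hne_h] with x hx hxm
    rw [Set.uIoc_of_le hh.le] at hxm
    have hxh : x < h := lt_of_le_of_ne hxm.2 hx
    simp [tfn, g, hxm.1.le, hxh]
  have haee : ∀ᵐ x ∂(MeasureTheory.volume.restrict (Set.uIoc (0:ℝ) h)),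
      g x = (t - x) ^ (α - 1) * tfn h 0 x :=
    (MeasureTheory.ae_restrict_iff' measurableSet_uIoc).mpr hae0
  have hI1 : IntervalIntegrable (fun τ => (t - τ) ^ (α - 1) * tfn h 0 τ)
      MeasureTheory.volume 0 h := hig.congr_ae haee
  -- the integrand vanishes on [h, t]
  have hzero : ∀ τ ∈ Set.uIcc h t, (t - τ) ^ (α - 1) * tfn h 0 τ = 0 := by
    intro τ hτ
    rw [Set.uIcc_of_le ht] at hτ
    have : ¬ τ < h := not_lt.mpr hτ.1
    simp [tfn, this]
  have hI2 : IntervalIntegrable (fun τ => (t - τ) ^ (α - 1) * tfn h 0 τ)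
      MeasureTheory.volume h t := by
    apply (intervalIntegrable_const (c := (0:ℝ))).congr_ae
    refine MeasureTheory.ae_restrict_of_forall_mem measurableSet_uIoc ?_
    intro x hxm
    exact (hzero x (Set.uIoc_subset_uIcc hxm)).symm
  -- split the integral
  have hsplit : (∫ τ in (0:ℝ)..t, (t - τ) ^ (α - 1) * tfn h 0 τ)
      = ∫ τ in (0:ℝ)..h, g τ := by
    rw [← intervalIntegral.integral_add_adjacent_intervals hI1 hI2]
    have h2 : (∫ τ in h..t, (t - τ) ^ (α - 1) * tfn h 0 τ) = 0 := by
      rw [intervalIntegral.integral_congr (g := fun _ => (0:ℝ)) hzero]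
      simp
    rw [h2, add_zero]
    exact (intervalIntegral.integral_congr_ae hae0).symm
  -- FTC on [0, h]
  have hderiv : ∀ x ∈ Set.Ioo (0:ℝ) h, HasDerivAt F (g x) x := by
    intro x hx
    have hpos : 0 < t - x := by linarith [hx.2]
    have hne : t - x ≠ 0 := hpos.ne'
    have hd1 : HasDerivAt (fun τ : ℝ => t - τ) (-1) x := by
      simpa using (hasDerivAt_id x).const_sub t
    have hA : HasDerivAt (fun τ : ℝ => (t - τ) ^ α)
        ((-1) * α * (t - x) ^ (α - 1)) x := hd1.rpow_const (Or.inl hne)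
    have hB : HasDerivAt (fun τ : ℝ => (t - τ) ^ (α + 1))
        ((-1) * (α + 1) * (t - x) ^ (α + 1 - 1)) x := hd1.rpow_const (Or.inl hne)
    have hD : HasDerivAt F
        (((-(t * ((-1) * α * (t - x) ^ (α - 1)))) / α
          + ((-1) * (α + 1) * (t - x) ^ (α + 1 - 1)) / (α + 1)) / h) x :=
      (((hA.const_mul t).neg.div_const α).add (hB.div_const (α + 1))).div_const h
    convert hD using 1
    have e1 : α + 1 - 1 = α := by ring
    have e2 : (t - x) ^ α = (t - x) ^ (α - 1) * (t - x) := by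
      rw [← Real.rpow_add_one hne (α - 1)]; ring_nf
    rw [e1, e2, hg]
    field_simp
    ring
  have hcont : ContinuousOn F (Set.Icc 0 h) := by
    apply ContinuousOn.div_const
    apply ContinuousOn.add
    · exact (((Real.continuous_rpow_const hα.le).comp
        (continuous_const.sub continuous_id)).continuousOn.const_smul t).neg.div_const α
    · exact (((Real.continuous_rpow_const (by linarith : (0:ℝ) ≤ α + 1)).comp
        (continuous_const.sub continuous_id)).continuousOn).div_const (α + 1)
  have hftc : (∫ τ in (0:ℝ)..h, g τ) = F h - F 0 :=
    intervalIntegral.integral_eq_sub_of_hasDerivAt_of_le hh.le hcont hderiv hig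
  -- put it together
  rw [rlIntegral, hsplit, hftc, hF]
  have hα1 : α + 1 ≠ 0 := by linarith
  simp only [sub_zero]
  field_simp
  ring
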